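/- Let λ > 0 and a = (a_1, a_{-1}) ∈ ℝ × ℝ^{q−1} with λ ≥ |a_1| + ‖a_{-1}‖_∞, where ‖a_{-1}‖_∞ = max_{2≤i≤q}|a_i|. Then the zero vector is the unique minimizer on ℝ^q of the hybrid ℓ₁/ℓ_∞-penalized proximal objective b ↦ λ·max(|b_1|, Σ_{i=2}^q |b_i|) + (1/2)‖b − a‖₂². -/
import Mathlib


/-- if `λ ≥ |a₁| + ‖a₋₁‖_∞`, then the zero vector is the unique
minimizer of the hybrid ℓ₁/ℓ_∞ proximal objective
`b ↦ λ·max(|b₁|, Σᵢ|b₋₁ᵢ|) + (1/2)‖b − a‖₂²` on `ℝ × ℝ^{q−1}`. -/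
theorem stmt_13 (m : ℕ) [NeZero m] (l : ℝ) (hl : 0 < l)
    (a1 : ℝ) (a2 : Fin m → ℝ)
    (hla : |a1| + (Finset.univ.sup' Finset.univ_nonempty fun i => |a2 i|) ≤ l)
    (f : ℝ × (Fin m → ℝ) → ℝ)
    (hf : ∀ b, f b = l * max |b.1| (∑ i, |b.2 i|)
      + (1 / 2) * ((b.1 - a1) ^ 2 + ∑ i, (b.2 i - a2 i) ^ 2)) :
    (∀ b, f 0 ≤ f b) ∧ (∀ b, (∀ c, f b ≤ f c) → b = 0) := by
  set M := (Finset.univ.sup' Finset.univ_nonempty fun i => |a2 i|) with hMdef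
  have key : ∀ b : ℝ × (Fin m → ℝ),
      f 0 + (1/2) * (b.1^2 + ∑ i, (b.2 i)^2) ≤ f b := by
    intro b
    rw [hf, hf]
    have hmax0 : 0 ≤ max |b.1| (∑ i, |b.2 i|) :=
      le_trans (abs_nonneg _) (le_max_left _ _)
    have h1 : b.1 * a1 ≤ max |b.1| (∑ i, |b.2 i|) * |a1| := by
      calc b.1 * a1 ≤ |b.1 * a1| := le_abs_self _
        _ = |b.1| * |a1| := abs_mul _ _
        _ ≤ max |b.1| (∑ i, |b.2 i|) * |a1| :=
            mul_le_mul_of_nonneg_right (le_max_left _ _) (abs_nonneg _)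
    have hM0 : 0 ≤ M := by
      have := Finset.le_sup' (fun i => |a2 i|)
        (Finset.mem_univ (Classical.arbitrary (Fin m)))
      exact le_trans (abs_nonneg _) this
    have h2 : (∑ i, b.2 i * a2 i) ≤ max |b.1| (∑ i, |b.2 i|) * M := by
      calc (∑ i, b.2 i * a2 i) ≤ ∑ i, |b.2 i| * M := by
            apply Finset.sum_le_sum
            intro i _
            calc b.2 i * a2 i ≤ |b.2 i * a2 i| := le_abs_self _
              _ = |b.2 i| * |a2 i| := abs_mul _ _
              _ ≤ |b.2 i| * M :=
                  mul_le_mul_of_nonneg_left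
                    (Finset.le_sup' (fun i => |a2 i|) (Finset.mem_univ i))
                    (abs_nonneg _)
        _ = (∑ i, |b.2 i|) * M := by rw [Finset.sum_mul]
        _ ≤ max |b.1| (∑ i, |b.2 i|) * M :=
            mul_le_mul_of_nonneg_right (le_max_right _ _) hM0
    have h3 : max |b.1| (∑ i, |b.2 i|) * (|a1| + M) ≤ l * max |b.1| (∑ i, |b.2 i|) := by
      rw [mul_comm l]
      exact mul_le_mul_of_nonneg_left hla hmax0
    have hexp : ∑ i, (b.2 i - a2 i)^2
        = (∑ i, (b.2 i)^2) - 2*(∑ i, b.2 i * a2 i) + ∑ i, (a2 i)^2 := by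
      calc ∑ i, (b.2 i - a2 i)^2
          = ∑ i, ((b.2 i)^2 - 2*(b.2 i * a2 i) + (a2 i)^2) :=
            Finset.sum_congr rfl (fun i _ => by ring)
        _ = _ := by
            rw [Finset.sum_add_distrib, Finset.sum_sub_distrib, Finset.mul_sum]
    simp only [Prod.fst_zero, Prod.snd_zero, Pi.zero_apply, abs_zero, abs_nonneg,
      zero_sub, neg_sq, Finset.sum_const_zero, max_self, mul_zero]
    rw [hexp]
    nlinarith [h1, h2, h3]
  constructor
  · intro b
    have h := key b
    have hs : 0 ≤ ∑ i, (b.2 i)^2 := Finset.sum_nonneg fun i _ => sq_nonneg _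
    nlinarith [sq_nonneg b.1]
  · intro b hb
    have h := key b
    have h0 := hb 0
    have hs : 0 ≤ ∑ i, (b.2 i)^2 := Finset.sum_nonneg fun i _ => sq_nonneg _
    have hb1 : b.1 = 0 := by nlinarith [sq_nonneg b.1]
    have hsum0 : ∑ i, (b.2 i)^2 = 0 := by nlinarith [sq_nonneg b.1]
    have hb2 : ∀ i, b.2 i = 0 := by
      intro i
      have := (Finset.sum_eq_zero_iff_of_nonneg
        (fun i _ => sq_nonneg (b.2 i))).mp hsum0 i (Finset.mem_univ i)
      exact pow_eq_zero_iff (two_ne_zero) |>.mp this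
    exact Prod.ext hb1 (funext hb2)
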